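/- Let X and Z be compact metric spaces equipped with their Borel σ-algebras, f : X → Z a continuous function, k_z : Z × Z → ℝ a continuous symmetric kernel, and k_x : X × X → ℝ a continuous symmetric kernel with the following property (satisfied by c₀-universal kernels): for every constant C > 0 and every sequence (ν_n) of finite signed Borel measures on X with total variation norm ‖ν_n‖_TV ≤ C and E_{k_x}(ν_n) → 0, one has ∫ g dν_n → 0 for every continuous g : X → ℝ. Let P be a Borel probability measure on X and, for each n, let x_{n,1},…,x_{n,m_n} ∈ X and w_{n,1},…,w_{n,m_n} ∈ ℝ satisfy Σ_i |w_{n,i}| ≤ C with C independent of n. Set ν_n := Σ_i w_{n,i} δ_{x_{n,i}} − P. If E_{k_x}(ν_n) → 0 as n → ∞, then E_{k_z}(f_*ν_n) → 0, where f_*ν_n = Σ_i w_{n,i} δ_{f(x_{n,i})} − f_*P is the pushforward of ν_n under f. -/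

import Mathlib

open MeasureTheory Filter Topology
open scoped ENNReal NNReal

/-- Integral of a real-valued function against a finite signed measure,
defined via the Jordan decomposition. -/
noncomputable def sintegral {X : Type*} [MeasurableSpace X]
    (ν : SignedMeasure X) (g : X → ℝ) : ℝ :=
  (∫ x, g x ∂ν.toJordanDecomposition.posPart) -
    (∫ x, g x ∂ν.toJordanDecomposition.negPart)

/-- The kernel energy `E_k(ν) = ∬ k(x,x') dν(x) dν(x')` of a finite signed measure. -/
noncomputable def energy {X : Type*} [MeasurableSpace X]
    (k : X × X → ℝ) (ν : SignedMeasure X) : ℝ :=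
  sintegral ν fun x => sintegral ν fun y => k (x, y)

section Aux

variable {α : Type*} [MeasurableSpace α]

lemma integrable_of_bounded {μ : Measure α} [IsFiniteMeasure μ] {g : α → ℝ}
    (hg : Measurable g) {B : ℝ} (hB : ∀ a, |g a| ≤ B) : Integrable g μ :=
  Integrable.mono' (integrable_const B) hg.aestronglyMeasurable
    (Filter.Eventually.of_forall fun a => by rw [Real.norm_eq_abs]; exact hB a)

lemma measure_decomp_eq {ν : SignedMeasure α} {μ₁ μ₂ : Measure α}
    [IsFiniteMeasure μ₁] [IsFiniteMeasure μ₂]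
    (hν : ν = μ₁.toSignedMeasure - μ₂.toSignedMeasure) :
    μ₁ + ν.toJordanDecomposition.negPart = ν.toJordanDecomposition.posPart + μ₂ := by
  ext s hs
  have h2 : ν s = (ν.toJordanDecomposition.posPart s).toReal
      - (ν.toJordanDecomposition.negPart s).toReal := by
    conv_lhs => rw [← ν.toSignedMeasure_toJordanDecomposition]
    rw [JordanDecomposition.toSignedMeasure, Measure.toSignedMeasure_sub_apply hs]
    rfl
  have h3 : ν s = (μ₁ s).toReal - (μ₂ s).toReal := by
    rw [hν, Measure.toSignedMeasure_sub_apply hs]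
    rfl
  rw [Measure.add_apply, Measure.add_apply]
  refine (ENNReal.toReal_eq_toReal_iff' ?_ ?_).1 ?_
  · exact ENNReal.add_ne_top.2 ⟨measure_ne_top _ _, measure_ne_top _ _⟩
  · exact ENNReal.add_ne_top.2 ⟨measure_ne_top _ _, measure_ne_top _ _⟩
  · rw [ENNReal.toReal_add (measure_ne_top _ _) (measure_ne_top _ _),
        ENNReal.toReal_add (measure_ne_top _ _) (measure_ne_top _ _)]
    linarith

lemma sintegral_decomp {ν : SignedMeasure α} {μ₁ μ₂ : Measure α}
    [IsFiniteMeasure μ₁] [IsFiniteMeasure μ₂]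
    (hν : ν = μ₁.toSignedMeasure - μ₂.toSignedMeasure)
    {g : α → ℝ} (hg : Measurable g) {B : ℝ} (hB : ∀ a, |g a| ≤ B) :
    sintegral ν g = (∫ a, g a ∂μ₁) - ∫ a, g a ∂μ₂ := by
  have key := measure_decomp_eq hν
  have h1 : (∫ a, g a ∂(μ₁ + ν.toJordanDecomposition.negPart))
      = ∫ a, g a ∂(ν.toJordanDecomposition.posPart + μ₂) := by rw [key]
  rw [integral_add_measure (integrable_of_bounded hg hB) (integrable_of_bounded hg hB),
      integral_add_measure (integrable_of_bounded hg hB) (integrable_of_bounded hg hB)] at h1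
  unfold sintegral
  linarith

lemma abs_sintegral_le (ν : SignedMeasure α) {g : α → ℝ} {B : ℝ} (hB : ∀ a, |g a| ≤ B) :
    |sintegral ν g| ≤ B * (ν.totalVariation Set.univ).toReal := by
  have h1 : ‖∫ a, g a ∂ν.toJordanDecomposition.posPart‖
      ≤ B * (ν.toJordanDecomposition.posPart Set.univ).toReal :=
    norm_integral_le_of_norm_le_const
      (Filter.Eventually.of_forall fun a => by rw [Real.norm_eq_abs]; exact hB a)
  have h2 : ‖∫ a, g a ∂ν.toJordanDecomposition.negPart‖
      ≤ B * (ν.toJordanDecomposition.negPart Set.univ).toReal :=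
    norm_integral_le_of_norm_le_const
      (Filter.Eventually.of_forall fun a => by rw [Real.norm_eq_abs]; exact hB a)
  have h3 : (ν.totalVariation Set.univ).toReal
      = (ν.toJordanDecomposition.posPart Set.univ).toReal
        + (ν.toJordanDecomposition.negPart Set.univ).toReal := by
    rw [SignedMeasure.totalVariation, Measure.add_apply,
        ENNReal.toReal_add (measure_ne_top _ _) (measure_ne_top _ _)]
  rw [Real.norm_eq_abs] at h1 h2
  have h4 : |sintegral ν g| ≤ |∫ a, g a ∂ν.toJordanDecomposition.posPart|
      + |∫ a, g a ∂ν.toJordanDecomposition.negPart| := abs_sub _ _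
  rw [h3, mul_add]
  linarith

lemma totalVariation_le_decomp {ν : SignedMeasure α} {μ₁ μ₂ : Measure α}
    [IsFiniteMeasure μ₁] [IsFiniteMeasure μ₂]
    (hν : ν = μ₁.toSignedMeasure - μ₂.toSignedMeasure) :
    ν.totalVariation Set.univ ≤ μ₁ Set.univ + μ₂ Set.univ := by
  obtain ⟨u, hu, hpu, hnuc⟩ := ν.toJordanDecomposition.mutuallySingular
  have key := measure_decomp_eq hν
  have keyc : μ₁ uᶜ + ν.toJordanDecomposition.negPart uᶜ
      = ν.toJordanDecomposition.posPart uᶜ + μ₂ uᶜ := by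
    rw [← Measure.add_apply, ← Measure.add_apply, key]
  have keyu : μ₁ u + ν.toJordanDecomposition.negPart u
      = ν.toJordanDecomposition.posPart u + μ₂ u := by
    rw [← Measure.add_apply, ← Measure.add_apply, key]
  rw [hnuc, add_zero] at keyc
  rw [hpu, zero_add] at keyu
  have h1 : ν.toJordanDecomposition.posPart Set.univ ≤ μ₁ Set.univ := by
    have hs : ν.toJordanDecomposition.posPart Set.univ
        ≤ ν.toJordanDecomposition.posPart u + ν.toJordanDecomposition.posPart uᶜ := by
      rw [← Set.union_compl_self u]; exact measure_union_le _ _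
    rw [hpu, zero_add] at hs
    refine le_trans hs (le_trans ?_ (measure_mono (Set.subset_univ uᶜ)))
    rw [keyc]; exact le_self_add
  have h2 : ν.toJordanDecomposition.negPart Set.univ ≤ μ₂ Set.univ := by
    have hs : ν.toJordanDecomposition.negPart Set.univ
        ≤ ν.toJordanDecomposition.negPart u + ν.toJordanDecomposition.negPart uᶜ := by
      rw [← Set.union_compl_self u]; exact measure_union_le _ _
    rw [hnuc, add_zero] at hs
    refine le_trans hs (le_trans ?_ (measure_mono (Set.subset_univ u)))
    have : ν.toJordanDecomposition.negPart u ≤ μ₁ u + ν.toJordanDecomposition.negPart u :=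
      le_add_self
    rw [keyu] at this
    exact this
  rw [SignedMeasure.totalVariation, Measure.add_apply]
  exact add_le_add h1 h2

lemma map_decomp {β : Type*} [MeasurableSpace β] (ν : SignedMeasure α) {f : α → β}
    (hf : Measurable f) :
    ν.map f = (ν.toJordanDecomposition.posPart.map f).toSignedMeasure -
      (ν.toJordanDecomposition.negPart.map f).toSignedMeasure := by
  haveI := ν.toJordanDecomposition.posPart.isFiniteMeasure_map f
  haveI := ν.toJordanDecomposition.negPart.isFiniteMeasure_map f
  ext s hs
  rw [VectorMeasure.map_apply _ hf hs, VectorMeasure.sub_apply,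
      Measure.toSignedMeasure_apply_measurable hs, Measure.toSignedMeasure_apply_measurable hs,
      Measure.real, Measure.real, Measure.map_apply hf hs, Measure.map_apply hf hs]
  conv_lhs => rw [← ν.toSignedMeasure_toJordanDecomposition]
  rw [JordanDecomposition.toSignedMeasure, Measure.toSignedMeasure_sub_apply (hf hs)]
  rfl

lemma sintegral_map {β : Type*} [MeasurableSpace β] (ν : SignedMeasure α) {f : α → β}
    (hf : Measurable f) {g : β → ℝ} (hg : Measurable g) {B : ℝ} (hB : ∀ b, |g b| ≤ B) :
    sintegral (ν.map f) g = sintegral ν (fun a => g (f a)) := by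
  haveI := ν.toJordanDecomposition.posPart.isFiniteMeasure_map f
  haveI := ν.toJordanDecomposition.negPart.isFiniteMeasure_map f
  rw [sintegral_decomp (map_decomp ν hf) hg hB,
      integral_map hf.aemeasurable hg.aestronglyMeasurable,
      integral_map hf.aemeasurable hg.aestronglyMeasurable]
  rfl

lemma sintegral_sub (ν : SignedMeasure α) {g h : α → ℝ} (hg : Measurable g) (hh : Measurable h)
    {B B' : ℝ} (hB : ∀ a, |g a| ≤ B) (hB' : ∀ a, |h a| ≤ B') :
    sintegral ν (fun a => g a - h a) = sintegral ν g - sintegral ν h := by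
  unfold sintegral
  rw [integral_sub (integrable_of_bounded hg hB) (integrable_of_bounded hh hB'),
      integral_sub (integrable_of_bounded hg hB) (integrable_of_bounded hh hB')]
  ring

instance isFiniteMeasure_finsetSum {ι : Type*} (s : Finset ι) (μ : ι → Measure α)
    [∀ i, IsFiniteMeasure (μ i)] : IsFiniteMeasure (∑ i ∈ s, μ i) := by
  constructor
  rw [Measure.finset_sum_apply]
  exact ENNReal.sum_lt_top.2 fun i _ => measure_lt_top _ _

lemma toSignedMeasure_finsetSum {ι : Type*} (s : Finset ι) (μ : ι → Measure α)
    [∀ i, IsFiniteMeasure (μ i)] :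
    (∑ i ∈ s, μ i).toSignedMeasure = ∑ i ∈ s, (μ i).toSignedMeasure := by
  classical
  induction s using Finset.induction_on with
  | empty => simp
  | insert _ _ h ih =>
    rw [Measure.toSignedMeasure_congr (Finset.sum_insert h), Measure.toSignedMeasure_add, ih,
      Finset.sum_insert h]

lemma smul_toSignedMeasure_decomp (r : ℝ) (μ : Measure α) [IsFiniteMeasure μ] :
    r • μ.toSignedMeasure = (r.toNNReal • μ).toSignedMeasure -
      ((-r).toNNReal • μ).toSignedMeasure := by
  rw [Measure.toSignedMeasure_smul, Measure.toSignedMeasure_smul]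
  ext s hs
  rw [VectorMeasure.sub_apply, VectorMeasure.smul_apply, VectorMeasure.smul_apply,
      VectorMeasure.smul_apply]
  rw [NNReal.smul_def, NNReal.smul_def, Real.coe_toNNReal', Real.coe_toNNReal',
      smul_eq_mul, smul_eq_mul, smul_eq_mul, ← sub_mul]
  congr 1
  rcases le_total 0 r with h | h
  · rw [max_eq_left h, max_eq_right (neg_nonpos.2 h), sub_zero]
  · rw [max_eq_right h, max_eq_left (neg_nonneg.2 h), zero_sub, neg_neg]

end Aux


/-- Theorem 1 of the paper: consistency of the mean-embedding estimator of `f(X)`.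
If `k_x` has the property (satisfied by `c₀`-universal kernels) that energy convergence
of a uniformly TV-bounded sequence of signed measures implies weak convergence, and if
the energies `E_{k_x}(ν_n)` of the estimation errors `ν_n = Σ_i w_{n,i} δ_{x_{n,i}} − P`
tend to `0`, then the energies `E_{k_z}(f_* ν_n)` of the pushforward errors tend to `0`. -/
theorem consistency_of_mean_embedding_of_function
    {X Z : Type*} [MetricSpace X] [CompactSpace X] [MeasurableSpace X] [BorelSpace X]
    [MetricSpace Z] [CompactSpace Z] [MeasurableSpace Z] [BorelSpace Z]
    (f : X → Z) (hf : Continuous f)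
    (kz : Z × Z → ℝ) (hkz_cont : Continuous kz)
    (hkz_symm : ∀ z z', kz (z, z') = kz (z', z))
    (kx : X × X → ℝ) (hkx_cont : Continuous kx)
    (hkx_symm : ∀ x x', kx (x, x') = kx (x', x))
    (hkx_univ : ∀ C' > (0 : ℝ), ∀ ρ : ℕ → SignedMeasure X,
      (∀ n, (ρ n).totalVariation Set.univ ≤ ENNReal.ofReal C') →
      Tendsto (fun n => energy kx (ρ n)) atTop (𝓝 0) →
      ∀ g : X → ℝ, Continuous g →
        Tendsto (fun n => sintegral (ρ n) g) atTop (𝓝 0))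
    (P : Measure X) [IsProbabilityMeasure P]
    (C : ℝ) (m : ℕ → ℕ) (x : (n : ℕ) → Fin (m n) → X) (w : (n : ℕ) → Fin (m n) → ℝ)
    (hw : ∀ n, ∑ i, |w n i| ≤ C)
    (ν : ℕ → SignedMeasure X)
    (hν : ∀ n, ν n =
      (∑ i, w n i • (Measure.dirac (x n i)).toSignedMeasure) - P.toSignedMeasure)
    (hconv : Tendsto (fun n => energy kx (ν n)) atTop (𝓝 0)) :
    Tendsto (fun n => energy kz ((ν n).map f)) atTop (𝓝 0) := by
  -- nonemptiness
  haveI hXne : Nonempty X := by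
    by_contra hempty
    rw [not_nonempty_iff] at hempty
    have h1 : P Set.univ = 1 := measure_univ
    rw [Set.univ_eq_empty_iff.2 hempty, measure_empty] at h1
    exact zero_ne_one h1
  haveI hZne : Nonempty Z := Nonempty.map f hXne
  -- a global bound for kz
  obtain ⟨q0, -, hq0⟩ := isCompact_univ.exists_isMaxOn (Set.univ_nonempty)
    ((continuous_abs.comp hkz_cont).continuousOn)
  have hBk' : ∀ q, |kz q| ≤ |kz q0| := fun q => hq0 (Set.mem_univ q)
  -- basic constants
  have hC0 : 0 ≤ C := le_trans (Finset.sum_nonneg fun i _ => abs_nonneg _) (hw 0)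
  set M : ℝ := C + 1 with hMdef
  have hM0 : 0 < M := by simp only [hMdef]; linarith
  -- decomposition of ν n as a difference of finite measures
  have hdecomp : ∀ n, ν n
      = (∑ i, (Real.toNNReal (w n i)) • Measure.dirac (x n i)).toSignedMeasure
        - ((∑ i, (Real.toNNReal (-(w n i))) • Measure.dirac (x n i)) + P).toSignedMeasure := by
    intro n
    rw [hν n]
    have h1 : (∑ i, w n i • (Measure.dirac (x n i)).toSignedMeasure)
        = (∑ i, ((Real.toNNReal (w n i)) • Measure.dirac (x n i)).toSignedMeasure)
          - ∑ i, ((Real.toNNReal (-(w n i))) • Measure.dirac (x n i)).toSignedMeasure := by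
      rw [← Finset.sum_sub_distrib]
      exact Finset.sum_congr rfl fun i _ => smul_toSignedMeasure_decomp _ _
    rw [h1, ← toSignedMeasure_finsetSum, ← toSignedMeasure_finsetSum,
        Measure.toSignedMeasure_add]
    abel
  -- the total variation bound
  have htv : ∀ n, (ν n).totalVariation Set.univ ≤ ENNReal.ofReal M := by
    intro n
    refine le_trans (totalVariation_le_decomp (hdecomp n)) ?_
    have hA : (∑ i, (Real.toNNReal (w n i)) • Measure.dirac (x n i)) Set.univ
        = ∑ i, ((Real.toNNReal (w n i) : ℝ≥0∞)) := by
      rw [Measure.finset_sum_apply]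
      exact Finset.sum_congr rfl fun i _ => by
        rw [Measure.smul_apply, measure_univ, ENNReal.smul_def, smul_eq_mul, mul_one]
    have hB2 : ((∑ i, (Real.toNNReal (-(w n i))) • Measure.dirac (x n i)) + P) Set.univ
        = (∑ i, ((Real.toNNReal (-(w n i)) : ℝ≥0∞))) + 1 := by
      rw [Measure.add_apply, Measure.finset_sum_apply, measure_univ]
      congr 1
      exact Finset.sum_congr rfl fun i _ => by
        rw [Measure.smul_apply, measure_univ, ENNReal.smul_def, smul_eq_mul, mul_one]
    rw [hA, hB2]
    have h3 : ∀ i, (Real.toNNReal (w n i) : ℝ≥0∞) + (Real.toNNReal (-(w n i)) : ℝ≥0∞)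
        = ENNReal.ofReal |w n i| := by
      intro i
      rcases le_total 0 (w n i) with h | h
      · rw [Real.toNNReal_of_nonpos (neg_nonpos.2 h), ENNReal.coe_zero, add_zero,
          abs_of_nonneg h, ENNReal.ofReal]
      · rw [Real.toNNReal_of_nonpos h, ENNReal.coe_zero, zero_add,
          abs_of_nonpos h, ENNReal.ofReal]
    calc (∑ i, (Real.toNNReal (w n i) : ℝ≥0∞))
          + ((∑ i, (Real.toNNReal (-(w n i)) : ℝ≥0∞)) + 1)
        = (∑ i, ENNReal.ofReal |w n i|) + 1 := by
          rw [← add_assoc, ← Finset.sum_add_distrib]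
          congr 1
          exact Finset.sum_congr rfl fun i _ => h3 i
      _ ≤ ENNReal.ofReal C + ENNReal.ofReal 1 := by
          refine add_le_add ?_ ?_
          · rw [← ENNReal.ofReal_sum_of_nonneg (fun i _ => abs_nonneg _)]
            exact ENNReal.ofReal_le_ofReal (hw n)
          · rw [ENNReal.ofReal_one]
      _ = ENNReal.ofReal M := by rw [← ENNReal.ofReal_add hC0 zero_le_one]
  -- weak convergence from the universality hypothesis
  have hweak : ∀ g : X → ℝ, Continuous g →
      Tendsto (fun n => sintegral (ν n) g) atTop (𝓝 0) :=
    hkx_univ M hM0 ν htv hconv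
  -- total variation bound for the pushforwards
  have htvf : ∀ n, ((SignedMeasure.totalVariation ((ν n).map f)) Set.univ).toReal ≤ M := by
    intro n
    haveI := ((ν n).toJordanDecomposition.posPart).isFiniteMeasure_map f
    haveI := ((ν n).toJordanDecomposition.negPart).isFiniteMeasure_map f
    refine ENNReal.toReal_le_of_le_ofReal hM0.le ?_
    refine le_trans (totalVariation_le_decomp (map_decomp (ν n) hf.measurable)) ?_
    rw [Measure.map_apply hf.measurable MeasurableSet.univ, Set.preimage_univ,
        Measure.map_apply hf.measurable MeasurableSet.univ, Set.preimage_univ]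
    refine le_trans (le_of_eq ?_) (htv n)
    rw [SignedMeasure.totalVariation, Measure.add_apply]
  -- main estimate
  rw [NormedAddCommGroup.tendsto_nhds_zero]
  intro ε hε
  set ε' : ℝ := ε / (2 * (M + 1) * (M + 1)) with hε'def
  have hε' : 0 < ε' := by
    apply div_pos hε
    positivity
  obtain ⟨δ, hδ, hδ'⟩ := Metric.uniformContinuous_iff.1
    (CompactSpace.uniformContinuous_of_continuous hkz_cont) ε' hε'
  obtain ⟨t, ht⟩ := isCompact_univ.elim_finite_subcover (fun z : Z => Metric.ball z δ)
    (fun z => Metric.isOpen_ball) (fun z _ => Set.mem_iUnion.2 ⟨z, Metric.mem_ball_self hδ⟩)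
  have hH : ∀ z : Z,
      Tendsto (fun n => sintegral ((ν n).map f) (fun z' => kz (z, z'))) atTop (𝓝 0) := by
    intro z
    have hgz : Continuous fun z' : Z => kz (z, z') :=
      hkz_cont.comp (continuous_const.prodMk continuous_id)
    have heq : ∀ n, sintegral ((ν n).map f) (fun z' => kz (z, z'))
        = sintegral (ν n) (fun x' => kz (z, f x')) := fun n =>
      sintegral_map (ν n) hf.measurable hgz.measurable (B := |kz q0|) (fun b => hBk' _)
    simp only [heq]
    exact hweak _ (hkz_cont.comp ((continuous_const.prodMk continuous_id).comp hf))
  have hev : ∀ᶠ n in atTop, ∀ z ∈ t,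
      |sintegral ((ν n).map f) (fun z' => kz (z, z'))| < ε' := by
    rw [Filter.eventually_all_finset]
    intro z hz
    have := (NormedAddCommGroup.tendsto_nhds_zero.1 (hH z)) ε' hε'
    simpa [Real.norm_eq_abs] using this
  filter_upwards [hev] with n hn
  have hTVn : ((SignedMeasure.totalVariation ((ν n).map f)) Set.univ).toReal ≤ M := htvf n
  have hHb : ∀ y : Z, |sintegral ((ν n).map f) (fun z' => kz (y, z'))| ≤ ε' * M + ε' := by
    intro y
    obtain ⟨z, hz, hyz⟩ : ∃ z ∈ t, y ∈ Metric.ball z δ := by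
      have := ht (Set.mem_univ y)
      simpa using this
    have hmy : Measurable fun z' : Z => kz (y, z') :=
      (hkz_cont.comp (continuous_const.prodMk continuous_id)).measurable
    have hmz : Measurable fun z' : Z => kz (z, z') :=
      (hkz_cont.comp (continuous_const.prodMk continuous_id)).measurable
    have hdiff : |sintegral ((ν n).map f) (fun z' => kz (y, z'))
        - sintegral ((ν n).map f) (fun z' => kz (z, z'))| ≤ ε' * M := by
      rw [← sintegral_sub ((ν n).map f) hmy hmz (B := |kz q0|) (B' := |kz q0|)
        (fun a => hBk' _) (fun a => hBk' _)]
      refine le_trans (abs_sintegral_le ((ν n).map f) (B := ε') ?_) ?_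
      · intro z'
        have hd : dist ((y, z') : Z × Z) ((z, z') : Z × Z) < δ := by
          rw [Prod.dist_eq]
          exact max_lt (Metric.mem_ball.1 hyz) (by rw [dist_self]; exact hδ)
        have := hδ' hd
        rw [Real.dist_eq] at this
        exact this.le
      · exact mul_le_mul_of_nonneg_left hTVn hε'.le
    have hz' := hn z hz
    have htri : |sintegral ((ν n).map f) (fun z' => kz (y, z'))|
        ≤ |sintegral ((ν n).map f) (fun z' => kz (y, z'))
            - sintegral ((ν n).map f) (fun z' => kz (z, z'))|
          + |sintegral ((ν n).map f) (fun z' => kz (z, z'))| := by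
      have habs := abs_add_le (sintegral ((ν n).map f) (fun z' => kz (y, z'))
          - sintegral ((ν n).map f) (fun z' => kz (z, z')))
        (sintegral ((ν n).map f) (fun z' => kz (z, z')))
      rwa [sub_add_cancel] at habs
    linarith
  have hfinal : |energy kz ((ν n).map f)| ≤ (ε' * M + ε') * M := by
    have h1 : energy kz ((ν n).map f)
        = sintegral ((ν n).map f) (fun z => sintegral ((ν n).map f) fun z' => kz (z, z')) := rfl
    rw [h1]
    refine le_trans (abs_sintegral_le ((ν n).map f) (B := ε' * M + ε') hHb) ?_
    have hnn : 0 ≤ ε' * M + ε' := by positivity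
    exact mul_le_mul_of_nonneg_left hTVn hnn
  rw [Real.norm_eq_abs]
  refine lt_of_le_of_lt hfinal ?_
  have he : ε' * (2 * (M + 1) * (M + 1)) = ε := by
    rw [hε'def]
    field_simp
  have hlt : (ε' * M + ε') * M < ε' * (2 * (M + 1) * (M + 1)) := by
    have : (ε' * M + ε') * M = ε' * (M * (M + 1)) := by ring
    rw [this]
    apply mul_lt_mul_of_pos_left _ hε'
    nlinarith
  rw [he] at hlt
  exact hlt
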